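/- Fix a nonnegative integer k and consider the matrix M_{k,0,0} of size 3+k. Then: (i) for every integer vector v ∈ ℤ^{3+k} with e_{E_x}ᵀ M_{k,0,0} v = 0, one has vᵀ M_{k,0,0} v ≡ 0 (mod 4); and (ii) for every integer vector v ∈ ℤ^{3+k}, both e_{E_y}ᵀ M_{k,0,0} v and e_{E_z}ᵀ M_{k,0,0} v are even. -/

import Mathlib

open Matrix

/-- Axis (0 = x, 1 = y, 2 = z) of a basis index `t ≥ 3` (curve classes). -/
def axOf (k l : ℕ) (t : ℕ) : ℕ :=
  if t < 3 + k then 0 else if t < 3 + k + l then 1 else 2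

/-- The intersection matrix `M_{k,l,m}` in the basis
`E_x, E_y, E_z, C_{x,1},…,C_{x,k}, C_{y,1},…,C_{y,l}, C_{z,1},…,C_{z,m}`. -/
def MM (k l m : ℕ) : Matrix (Fin (3 + k + l + m)) (Fin (3 + k + l + m)) ℤ :=
  fun i j =>
    if (i : ℕ) < 3 then
      if (j : ℕ) < 3 then (if i = j then 0 else 2)
      else (if (i : ℕ) = axOf k l j then 1 else 0)
    else
      if (j : ℕ) < 3 then (if (j : ℕ) = axOf k l i then 1 else 0)
      else (if i = j then -2 else 0)

lemma ltk0 (k : ℕ) : 0 < 3 + k + 0 + 0 := by omega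

lemma ltk1 (k : ℕ) : 1 < 3 + k + 0 + 0 := by omega

lemma ltk2 (k : ℕ) : 2 < 3 + k + 0 + 0 := by omega

lemma sum_split (k : ℕ) (f : Fin (3 + k + 0 + 0) → ℤ) :
    ∑ j, f j = f ⟨0, ltk0 k⟩ + f ⟨1, ltk1 k⟩ + f ⟨2, ltk2 k⟩
      + ∑ i : Fin k, f ⟨3 + (i : ℕ), by omega⟩ := by
  show ∑ j : Fin (3 + k), f j = _
  rw [Fin.sum_univ_add (f := fun i : Fin (3 + k) => f i), Fin.sum_univ_three]
  rfl

lemma mv0 (k : ℕ) (v : Fin (3 + k + 0 + 0) → ℤ) :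
    (MM k 0 0).mulVec v ⟨0, ltk0 k⟩ =
      2 * v ⟨1, ltk1 k⟩ + 2 * v ⟨2, ltk2 k⟩ + ∑ i : Fin k, v ⟨3 + (i : ℕ), by omega⟩ := by
  show ∑ j, MM k 0 0 ⟨0, ltk0 k⟩ j * v j = _
  rw [sum_split]
  have h : ∀ i : Fin k, MM k 0 0 ⟨0, ltk0 k⟩ ⟨3 + (i : ℕ), by omega⟩ = 1 := by
    intro i
    simp [MM, axOf, i.isLt]
  simp [MM, axOf, Fin.ext_iff]

lemma mv1 (k : ℕ) (v : Fin (3 + k + 0 + 0) → ℤ) :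
    (MM k 0 0).mulVec v ⟨1, ltk1 k⟩ = 2 * v ⟨0, ltk0 k⟩ + 2 * v ⟨2, ltk2 k⟩ := by
  show ∑ j, MM k 0 0 ⟨1, ltk1 k⟩ j * v j = _
  rw [sum_split]
  have h : ∀ i : Fin k, MM k 0 0 ⟨1, ltk1 k⟩ ⟨3 + (i : ℕ), by omega⟩ = 0 := by
    intro i
    simp [MM, axOf, i.isLt]
  simp [MM, axOf, Fin.ext_iff]

lemma mv2 (k : ℕ) (v : Fin (3 + k + 0 + 0) → ℤ) :
    (MM k 0 0).mulVec v ⟨2, ltk2 k⟩ = 2 * v ⟨0, ltk0 k⟩ + 2 * v ⟨1, ltk1 k⟩ := by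
  show ∑ j, MM k 0 0 ⟨2, ltk2 k⟩ j * v j = _
  rw [sum_split]
  have h : ∀ i : Fin k, MM k 0 0 ⟨2, ltk2 k⟩ ⟨3 + (i : ℕ), by omega⟩ = 0 := by
    intro i
    simp [MM, axOf, i.isLt]
  simp [MM, axOf, Fin.ext_iff]

lemma mvt (k : ℕ) (v : Fin (3 + k + 0 + 0) → ℤ) (t : Fin k) :
    (MM k 0 0).mulVec v ⟨3 + (t : ℕ), by omega⟩ =
      v ⟨0, ltk0 k⟩ - 2 * v ⟨3 + (t : ℕ), by omega⟩ := by
  show ∑ j, MM k 0 0 ⟨3 + (t : ℕ), by omega⟩ j * v j = _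
  rw [sum_split]
  have h : ∀ i : Fin k, MM k 0 0 ⟨3 + (t : ℕ), by omega⟩ ⟨3 + (i : ℕ), by omega⟩
      = if t = i then -2 else 0 := by
    intro i
    by_cases hti : t = i
    · simp [MM, axOf, hti]
    · have : (t : ℕ) ≠ (i : ℕ) := fun h => hti (Fin.ext h)
      simp [MM, axOf, Fin.ext_iff, this, hti]
  simp only [MM, axOf]
  norm_num [Fin.ext_iff]
  simp only [Fin.val_eq_val, Finset.sum_ite_eq, Finset.mem_univ, if_true]
  ring

lemma two_dvd_sq_sub (x : ℤ) : (2:ℤ) ∣ x * x - x := by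
  rcases Int.even_or_odd x with ⟨c, hc⟩ | ⟨c, hc⟩
  · exact ⟨2*c*c - c, by rw [hc]; ring⟩
  · exact ⟨2*c*c + c, by rw [hc]; ring⟩

/-- For the matrix `M_{k,0,0}`: (i) any integer vector orthogonal to `e_{E_x}`
(w.r.t. `M_{k,0,0}`) has self-intersection divisible by 4; (ii) every integer
vector pairs evenly with `e_{E_y}` and with `e_{E_z}`. -/
theorem M_k00_parity (k : ℕ) :
    (∀ v : Fin (3 + k + 0 + 0) → ℤ,
        (MM k 0 0).mulVec v ⟨0, by omega⟩ = 0 →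
          (4 : ℤ) ∣ v ⬝ᵥ (MM k 0 0).mulVec v) ∧
    (∀ v : Fin (3 + k + 0 + 0) → ℤ,
        Even ((MM k 0 0).mulVec v ⟨1, by omega⟩) ∧
        Even ((MM k 0 0).mulVec v ⟨2, by omega⟩)) := by
  constructor
  · intro v hv
    have hQ : v ⬝ᵥ (MM k 0 0).mulVec v =
        v ⟨0, by omega⟩ * (MM k 0 0).mulVec v ⟨0, by omega⟩
        + v ⟨1, by omega⟩ * (MM k 0 0).mulVec v ⟨1, by omega⟩
        + v ⟨2, by omega⟩ * (MM k 0 0).mulVec v ⟨2, by omega⟩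
        + ∑ i : Fin k, v ⟨3 + (i:ℕ), by omega⟩ * (MM k 0 0).mulVec v ⟨3 + (i:ℕ), by omega⟩ := by
      show ∑ j, v j * (MM k 0 0).mulVec v j = _
      exact sum_split k _
    have hsum : ∑ i : Fin k, v ⟨3 + (i:ℕ), by omega⟩ * (MM k 0 0).mulVec v ⟨3 + (i:ℕ), by omega⟩
        = ∑ i : Fin k, (v ⟨3 + (i:ℕ), by omega⟩ * v ⟨0, by omega⟩
            - 2 * (v ⟨3 + (i:ℕ), by omega⟩ * v ⟨3 + (i:ℕ), by omega⟩)) :=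
      Finset.sum_congr rfl fun i _ => by
        linear_combination v ⟨3 + (i:ℕ), by omega⟩ * mvt k v i
    have hsum2 : ∑ i : Fin k, (v ⟨3 + (i:ℕ), by omega⟩ * v ⟨0, by omega⟩
            - 2 * (v ⟨3 + (i:ℕ), by omega⟩ * v ⟨3 + (i:ℕ), by omega⟩))
        = (∑ i : Fin k, v ⟨3 + (i:ℕ), by omega⟩ * v ⟨0, by omega⟩)
          - ∑ i : Fin k, 2 * (v ⟨3 + (i:ℕ), by omega⟩ * v ⟨3 + (i:ℕ), by omega⟩) :=
      Finset.sum_sub_distrib _ _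
    have hsum3 : ∑ i : Fin k, v ⟨3 + (i:ℕ), by omega⟩ * v ⟨0, by omega⟩
        = (∑ i : Fin k, v ⟨3 + (i:ℕ), by omega⟩) * v ⟨0, by omega⟩ :=
      (Finset.sum_mul _ _ _).symm
    have hsum4 : ∑ i : Fin k, 2 * (v ⟨3 + (i:ℕ), by omega⟩ * v ⟨3 + (i:ℕ), by omega⟩)
        = 2 * ∑ i : Fin k, v ⟨3 + (i:ℕ), by omega⟩ * v ⟨3 + (i:ℕ), by omega⟩ :=
      (Finset.mul_sum _ _ _).symm
    have hT : (∑ i : Fin k, v ⟨3 + (i:ℕ), by omega⟩)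
        = -2 * v ⟨1, by omega⟩ - 2 * v ⟨2, by omega⟩ := by
      linear_combination hv - mv0 k v
    have h2U : (2:ℤ) ∣ ∑ i : Fin k, v ⟨3 + (i:ℕ), by omega⟩ * v ⟨3 + (i:ℕ), by omega⟩ := by
      have h1 : (2:ℤ) ∣ ∑ i : Fin k, (v ⟨3 + (i:ℕ), by omega⟩ * v ⟨3 + (i:ℕ), by omega⟩
          - v ⟨3 + (i:ℕ), by omega⟩) :=
        Finset.dvd_sum fun i _ => two_dvd_sq_sub _
      have e : ∑ i : Fin k, (v ⟨3 + (i:ℕ), by omega⟩ * v ⟨3 + (i:ℕ), by omega⟩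
            - v ⟨3 + (i:ℕ), by omega⟩)
          = (∑ i : Fin k, v ⟨3 + (i:ℕ), by omega⟩ * v ⟨3 + (i:ℕ), by omega⟩)
            - ∑ i : Fin k, v ⟨3 + (i:ℕ), by omega⟩ :=
        Finset.sum_sub_distrib _ _
      obtain ⟨a, ha⟩ := h1
      refine ⟨a + (-v ⟨1, by omega⟩ - v ⟨2, by omega⟩), ?_⟩
      linear_combination ha - e + hT
    obtain ⟨c, hU⟩ := h2U
    refine ⟨v ⟨1, by omega⟩ * v ⟨2, by omega⟩ - c, ?_⟩
    linear_combination hQ + v ⟨0, by omega⟩ * hv + v ⟨1, by omega⟩ * mv1 k v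
      + v ⟨2, by omega⟩ * mv2 k v + hsum + hsum2 + hsum3 - hsum4
      + v ⟨0, by omega⟩ * hT + (-2) * hU
  · intro v
    exact ⟨⟨v ⟨0, by omega⟩ + v ⟨2, by omega⟩, by linear_combination mv1 k v⟩,
           ⟨v ⟨0, by omega⟩ + v ⟨1, by omega⟩, by linear_combination mv2 k v⟩⟩
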